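/- The Price of Anarchy of the two-user selfish routing game on the load-balancing network can be arbitrarily large: for every r > 0, L > 0 and every M > 0, there exist δ and c with 0 < δ < L < c and cδ < rL such that 1 + ((r/2 − ζ)c)/(rL) > M, where ζ = cδ/(2L). -/

import Mathlib

/-- Elbow latency function with parameters `r, L, δ`. -/
noncomputable def T (r L δ x : ℝ) : ℝ := max 0 (L / δ * (x - r) + L)

/-- Cost of user 1 in the two-user load-balancing game. -/
noncomputable def J₁ (r L δ c x₁ x₂ : ℝ) : ℝ :=
  x₁ * T r L δ (x₁ + (r - x₂)) + (r - x₁) * (c + T r L δ (x₂ + (r - x₁)))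

/-- Cost of user 2 in the two-user load-balancing game. -/
noncomputable def J₂ (r L δ c x₁ x₂ : ℝ) : ℝ :=
  x₂ * T r L δ (x₂ + (r - x₁)) + (r - x₂) * (c + T r L δ (x₁ + (r - x₂)))

theorem price_of_anarchy_unbounded
    (r L : ℝ) (hr : 0 < r) (hL : 0 < L) (M : ℝ) (hM : 0 < M) :
    ∃ δ c : ℝ, 0 < δ ∧ δ < L ∧ L < c ∧ c * δ < r * L ∧
      1 + (r / 2 - c * δ / (2 * L)) * c / (r * L) > M := by
  set c : ℝ := max (L + 1) (4 * L * M) with hc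
  have hcL : L < c := lt_of_lt_of_le (by linarith) (le_max_left _ _)
  have hc0 : 0 < c := hL.trans hcL
  have hcM : 4 * L * M ≤ c := le_max_right _ _
  set δ : ℝ := min (L / 2) (r * L / (2 * c)) with hδ
  have hδ0 : 0 < δ := lt_min (by linarith) (by positivity)
  have hδL : δ < L := lt_of_le_of_lt (min_le_left _ _) (by linarith)
  have hδ2 : δ ≤ r * L / (2 * c) := min_le_right _ _
  have hcδ : c * δ ≤ r * L / 2 := by
    have := mul_le_mul_of_nonneg_left hδ2 hc0.le
    calc c * δ ≤ c * (r * L / (2 * c)) := this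
      _ = r * L / 2 := by field_simp
  refine ⟨δ, c, hδ0, hδL, hcL, hcδ.trans_lt (by nlinarith), ?_⟩
  have hζ : c * δ / (2 * L) ≤ r / 4 := by
    rw [div_le_iff₀ (by linarith)]
    nlinarith
  have key : (r / 4) * c / (r * L) ≤ (r / 2 - c * δ / (2 * L)) * c / (r * L) := by
    gcongr
    linarith
  have h4 : M ≤ (r / 4) * c / (r * L) := by
    rw [le_div_iff₀ (by positivity)]
    nlinarith
  linarith
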